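/- For m = 2k, n = 2l with k,l ≥ 2, the set S = {(0,0), (0,1), (1,l), (k,0)} is a mixed resolving set of the torus graph T_{m,n} = C_m □ C_n; hence β_M(T_{2k,2l}) ≤ 4. -/

import Mathlib

open SimpleGraph

/-- Distance from a vertex `w` to an edge `e` (as a `Sym2`). -/
noncomputable def edist {V : Type*} (G : SimpleGraph V) (w : V) (e : Sym2 V) : Nat :=
  Sym2.lift ⟨fun u v => min (G.dist w u) (G.dist w v), fun u v => min_comm _ _⟩ e

/-- `S` is a mixed resolving set: every two distinct elements of `V ∪ E`
are distinguished by the distance to some vertex of `S`. -/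
def MixedResolvingSet {V : Type*} (G : SimpleGraph V) (S : Set V) : Prop :=
  (∀ u v : V, u ≠ v → ∃ w ∈ S, G.dist w u ≠ G.dist w v) ∧
  (∀ e ∈ G.edgeSet, ∀ f ∈ G.edgeSet, e ≠ f → ∃ w ∈ S, edist G w e ≠ edist G w f) ∧
  (∀ u : V, ∀ e ∈ G.edgeSet, ∃ w ∈ S, G.dist w u ≠ edist G w e)

/-- The mixed metric dimension of `G`. -/
noncomputable def mixedDim {V : Type*} (G : SimpleGraph V) : Nat :=
  sInf {n | ∃ S : Set V, MixedResolvingSet G S ∧ S.ncard = n}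

/-- The cycle graph on `ZMod n`. -/
def cycleZ (n : Nat) : SimpleGraph (ZMod n) :=
  SimpleGraph.fromRel (fun u v => u - v = 1)

/-- The torus graph `T_{m,n} = C_m □ C_n`. -/
def torus (m n : Nat) : SimpleGraph (ZMod m × ZMod n) :=
  (cycleZ m).boxProd (cycleZ n)

namespace TorusAux


def cdist (n p q : Nat) : Nat := min (max (p-q) (q-p)) (n - max (p-q) (q-p))

theorem e0 {k i : Nat} (h : i < 2*k) : cdist (2*k) 0 i = if i ≤ k then i else 2*k - i := by
  simp only [cdist]; split <;> omega

theorem e1 {k i : Nat} (hk : 1 ≤ k) (h : i < 2*k) :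
    cdist (2*k) 1 i = if i = 0 then 1 else if i ≤ k then i - 1 else 2*k + 1 - i := by
  simp only [cdist]; split
  · omega
  · split <;> omega

theorem csum {k i : Nat} (h : i < 2*k) : cdist (2*k) 0 i + cdist (2*k) k i = k := by
  simp only [cdist]; omega

theorem cpar {k a i : Nat} (ha : a < 2*k) (h : i < 2*k) : cdist (2*k) a i % 2 = (a + i) % 2 := by
  simp only [cdist]; omega

theorem cstep {k a i i2 : Nat} (ha : a < 2*k) (h : i < 2*k) (h2 : i2 < 2*k)
    (hw : i2 = i + 1 ∨ (i = 2*k - 1 ∧ i2 = 0)) :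
    cdist (2*k) a i ≤ cdist (2*k) a i2 + 1 ∧ cdist (2*k) a i2 ≤ cdist (2*k) a i + 1 := by
  simp only [cdist]; omega

theorem s0 {k i i2 : Nat} (hk : 1 ≤ k) (h : i < 2*k) (h2 : i2 < 2*k)
    (hw : i2 = i + 1 ∨ (i = 2*k - 1 ∧ i2 = 0)) :
    cdist (2*k) 0 i + cdist (2*k) 0 i2 = if i < k then 2*i+1 else 4*k - 2*i - 1 := by
  simp only [cdist]; split <;> omega

theorem s1 {k i i2 : Nat} (hk : 2 ≤ k) (h : i < 2*k) (h2 : i2 < 2*k)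
    (hw : i2 = i + 1 ∨ (i = 2*k - 1 ∧ i2 = 0)) :
    cdist (2*k) 1 i + cdist (2*k) 1 i2 =
      if i = 0 then 1 else if i ≤ k then 2*i - 1 else 4*k + 1 - 2*i := by
  simp only [cdist]; split
  · omega
  · split <;> omega

theorem sk {k i i2 : Nat} (hk : 1 ≤ k) (h : i < 2*k) (h2 : i2 < 2*k)
    (hw : i2 = i + 1 ∨ (i = 2*k - 1 ∧ i2 = 0)) :
    cdist (2*k) k i + cdist (2*k) k i2 = if i < k then 2*k - 2*i - 1 else 2*i + 1 - 2*k := by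
  simp only [cdist]; split <;> omega

/-- `f0, f1` determine a vertex coordinate. -/
theorem inj_v {k i p : Nat} (hk : 2 ≤ k) (hi : i < 2*k) (hp : p < 2*k)
    (h0 : cdist (2*k) 0 i = cdist (2*k) 0 p) (h1 : cdist (2*k) 1 i = cdist (2*k) 1 p) :
    i = p := by
  rw [e0 hi, e0 hp] at h0
  rw [e1 (by omega) hi, e1 (by omega) hp] at h1
  split_ifs at h0 h1 <;> omega

/-- the pair-sums `S0, S1` determine an edge coordinate. -/
theorem inj_e {k i i2 p p2 : Nat} (hk : 2 ≤ k) (hi : i < 2*k) (hi2 : i2 < 2*k)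
    (hp : p < 2*k) (hp2 : p2 < 2*k)
    (hwi : i2 = i + 1 ∨ (i = 2*k - 1 ∧ i2 = 0)) (hwp : p2 = p + 1 ∨ (p = 2*k - 1 ∧ p2 = 0))
    (h0 : cdist (2*k) 0 i + cdist (2*k) 0 i2 = cdist (2*k) 0 p + cdist (2*k) 0 p2)
    (h1 : cdist (2*k) 1 i + cdist (2*k) 1 i2 = cdist (2*k) 1 p + cdist (2*k) 1 p2) :
    i = p := by
  rw [s0 (by omega) hi hi2 hwi, s0 (by omega) hp hp2 hwp] at h0
  rw [s1 hk hi hi2 hwi, s1 hk hp hp2 hwp] at h1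
  split_ifs at h0 h1 <;> omega

theorem resolve_vv {k l a b p q : Nat} (hk : 2 ≤ k) (hl : 2 ≤ l)
    (ha : a < 2*k) (hb : b < 2*l) (hp : p < 2*k) (hq : q < 2*l)
    (h1 : cdist (2*k) 0 a + cdist (2*l) 0 b = cdist (2*k) 0 p + cdist (2*l) 0 q)
    (h2 : cdist (2*k) 0 a + cdist (2*l) 1 b = cdist (2*k) 0 p + cdist (2*l) 1 q)
    (h3 : cdist (2*k) 1 a + cdist (2*l) l b = cdist (2*k) 1 p + cdist (2*l) l q)
    (h4 : cdist (2*k) k a + cdist (2*l) 0 b = cdist (2*k) k p + cdist (2*l) 0 q) :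
    a = p ∧ b = q := by
  have c1 := csum ha; have c2 := csum hp; have c3 := csum hb; have c4 := csum hq
  have hg0 : cdist (2*l) 0 b = cdist (2*l) 0 q := by omega
  have hf0 : cdist (2*k) 0 a = cdist (2*k) 0 p := by omega
  have hg1 : cdist (2*l) 1 b = cdist (2*l) 1 q := by omega
  have hbq : b = q := inj_v hl hb hq hg0 hg1
  subst hbq
  have hf1 : cdist (2*k) 1 a = cdist (2*k) 1 p := by omega
  exact ⟨inj_v hk ha hp hf0 hf1, rfl⟩



theorem hsum {k l a b i i2 j : Nat} (ha : a < 2*k) (hb : b < 2*l)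
    (hi : i < 2*k) (hi2 : i2 < 2*k) (hw : i2 = i + 1 ∨ (i = 2*k - 1 ∧ i2 = 0)) :
    2 * min (cdist (2*k) a i + cdist (2*l) b j) (cdist (2*k) a i2 + cdist (2*l) b j) + 1
      = cdist (2*k) a i + cdist (2*k) a i2 + 2 * cdist (2*l) b j := by
  have p1 := cpar ha hi; have p2 := cpar ha hi2; have s := cstep ha hi hi2 hw; omega

theorem vsum {k l a b i j j2 : Nat} (ha : a < 2*k) (hb : b < 2*l)
    (hj : j < 2*l) (hj2 : j2 < 2*l) (hw : j2 = j + 1 ∨ (j = 2*l - 1 ∧ j2 = 0)) :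
    2 * min (cdist (2*k) a i + cdist (2*l) b j) (cdist (2*k) a i + cdist (2*l) b j2) + 1
      = 2 * cdist (2*k) a i + cdist (2*l) b j + cdist (2*l) b j2 := by
  have p1 := cpar hb hj; have p2 := cpar hb hj2; have s := cstep hb hj hj2 hw; omega


theorem resolve_ee_hh {k l i i2 j p p2 q : Nat} (hk : 2 ≤ k) (hl : 2 ≤ l)
    (hi : i < 2*k) (hi2 : i2 < 2*k) (hj : j < 2*l)
    (hp : p < 2*k) (hp2 : p2 < 2*k) (hq : q < 2*l)
    (hwi : i2 = i + 1 ∨ (i = 2*k - 1 ∧ i2 = 0)) (hwp : p2 = p + 1 ∨ (p = 2*k - 1 ∧ p2 = 0))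
    (h1 : min (cdist (2*k) 0 i + cdist (2*l) 0 j) (cdist (2*k) 0 i2 + cdist (2*l) 0 j)
        = min (cdist (2*k) 0 p + cdist (2*l) 0 q) (cdist (2*k) 0 p2 + cdist (2*l) 0 q))
    (h2 : min (cdist (2*k) 0 i + cdist (2*l) 1 j) (cdist (2*k) 0 i2 + cdist (2*l) 1 j)
        = min (cdist (2*k) 0 p + cdist (2*l) 1 q) (cdist (2*k) 0 p2 + cdist (2*l) 1 q))
    (h3 : min (cdist (2*k) 1 i + cdist (2*l) l j) (cdist (2*k) 1 i2 + cdist (2*l) l j)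
        = min (cdist (2*k) 1 p + cdist (2*l) l q) (cdist (2*k) 1 p2 + cdist (2*l) l q))
    (h4 : min (cdist (2*k) k i + cdist (2*l) 0 j) (cdist (2*k) k i2 + cdist (2*l) 0 j)
        = min (cdist (2*k) k p + cdist (2*l) 0 q) (cdist (2*k) k p2 + cdist (2*l) 0 q)) :
    i = p ∧ i2 = p2 ∧ j = q := by
  have A1 : 2 * min (cdist (2*k) 0 i + cdist (2*l) 0 j) (cdist (2*k) 0 i2 + cdist (2*l) 0 j) + 1 = cdist (2*k) 0 i + cdist (2*k) 0 i2 + 2 * cdist (2*l) 0 j := hsum (by omega) (by omega) hi hi2 hwi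
  have B1 : 2 * min (cdist (2*k) 0 p + cdist (2*l) 0 q) (cdist (2*k) 0 p2 + cdist (2*l) 0 q) + 1 = cdist (2*k) 0 p + cdist (2*k) 0 p2 + 2 * cdist (2*l) 0 q := hsum (by omega) (by omega) hp hp2 hwp
  have sum1 : cdist (2*k) 0 i + cdist (2*k) 0 i2 + 2 * cdist (2*l) 0 j
      = cdist (2*k) 0 p + cdist (2*k) 0 p2 + 2 * cdist (2*l) 0 q := by omega
  clear A1 B1 h1
  have A2 : 2 * min (cdist (2*k) 0 i + cdist (2*l) 1 j) (cdist (2*k) 0 i2 + cdist (2*l) 1 j) + 1 = cdist (2*k) 0 i + cdist (2*k) 0 i2 + 2 * cdist (2*l) 1 j := hsum (by omega) (by omega) hi hi2 hwi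
  have B2 : 2 * min (cdist (2*k) 0 p + cdist (2*l) 1 q) (cdist (2*k) 0 p2 + cdist (2*l) 1 q) + 1 = cdist (2*k) 0 p + cdist (2*k) 0 p2 + 2 * cdist (2*l) 1 q := hsum (by omega) (by omega) hp hp2 hwp
  have sum2 : cdist (2*k) 0 i + cdist (2*k) 0 i2 + 2 * cdist (2*l) 1 j
      = cdist (2*k) 0 p + cdist (2*k) 0 p2 + 2 * cdist (2*l) 1 q := by omega
  clear A2 B2 h2
  have A3 : 2 * min (cdist (2*k) 1 i + cdist (2*l) l j) (cdist (2*k) 1 i2 + cdist (2*l) l j) + 1 = cdist (2*k) 1 i + cdist (2*k) 1 i2 + 2 * cdist (2*l) l j := hsum (by omega) (by omega) hi hi2 hwi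
  have B3 : 2 * min (cdist (2*k) 1 p + cdist (2*l) l q) (cdist (2*k) 1 p2 + cdist (2*l) l q) + 1 = cdist (2*k) 1 p + cdist (2*k) 1 p2 + 2 * cdist (2*l) l q := hsum (by omega) (by omega) hp hp2 hwp
  have sum3 : cdist (2*k) 1 i + cdist (2*k) 1 i2 + 2 * cdist (2*l) l j
      = cdist (2*k) 1 p + cdist (2*k) 1 p2 + 2 * cdist (2*l) l q := by omega
  clear A3 B3 h3
  have A4 : 2 * min (cdist (2*k) k i + cdist (2*l) 0 j) (cdist (2*k) k i2 + cdist (2*l) 0 j) + 1 = cdist (2*k) k i + cdist (2*k) k i2 + 2 * cdist (2*l) 0 j := hsum (by omega) (by omega) hi hi2 hwi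
  have B4 : 2 * min (cdist (2*k) k p + cdist (2*l) 0 q) (cdist (2*k) k p2 + cdist (2*l) 0 q) + 1 = cdist (2*k) k p + cdist (2*k) k p2 + 2 * cdist (2*l) 0 q := hsum (by omega) (by omega) hp hp2 hwp
  have sum4 : cdist (2*k) k i + cdist (2*k) k i2 + 2 * cdist (2*l) 0 j
      = cdist (2*k) k p + cdist (2*k) k p2 + 2 * cdist (2*l) 0 q := by omega
  clear A4 B4 h4
  have ci := csum hi; have ci2 := csum hi2; have cp := csum hp; have cp2 := csum hp2
  have hg0 : cdist (2*l) 0 j = cdist (2*l) 0 q := by omega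
  have hS0 : cdist (2*k) 0 i + cdist (2*k) 0 i2 = cdist (2*k) 0 p + cdist (2*k) 0 p2 := by omega
  have hg1 : cdist (2*l) 1 j = cdist (2*l) 1 q := by omega
  have hjq : j = q := inj_v hl hj hq hg0 hg1
  subst hjq
  have hS1 : cdist (2*k) 1 i + cdist (2*k) 1 i2 = cdist (2*k) 1 p + cdist (2*k) 1 p2 := by omega
  have hip : i = p := inj_e hk hi hi2 hp hp2 hwi hwp hS0 hS1
  exact ⟨hip, by omega, rfl⟩


theorem resolve_ee_vv {k l i j j2 p q q2 : Nat} (hk : 2 ≤ k) (hl : 2 ≤ l)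
    (hi : i < 2*k) (hj : j < 2*l) (hj2 : j2 < 2*l)
    (hp : p < 2*k) (hq : q < 2*l) (hq2 : q2 < 2*l)
    (hwj : j2 = j + 1 ∨ (j = 2*l - 1 ∧ j2 = 0)) (hwq : q2 = q + 1 ∨ (q = 2*l - 1 ∧ q2 = 0))
    (h1 : min (cdist (2*k) 0 i + cdist (2*l) 0 j) (cdist (2*k) 0 i + cdist (2*l) 0 j2)
        = min (cdist (2*k) 0 p + cdist (2*l) 0 q) (cdist (2*k) 0 p + cdist (2*l) 0 q2))
    (h2 : min (cdist (2*k) 0 i + cdist (2*l) 1 j) (cdist (2*k) 0 i + cdist (2*l) 1 j2)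
        = min (cdist (2*k) 0 p + cdist (2*l) 1 q) (cdist (2*k) 0 p + cdist (2*l) 1 q2))
    (h3 : min (cdist (2*k) 1 i + cdist (2*l) l j) (cdist (2*k) 1 i + cdist (2*l) l j2)
        = min (cdist (2*k) 1 p + cdist (2*l) l q) (cdist (2*k) 1 p + cdist (2*l) l q2))
    (h4 : min (cdist (2*k) k i + cdist (2*l) 0 j) (cdist (2*k) k i + cdist (2*l) 0 j2)
        = min (cdist (2*k) k p + cdist (2*l) 0 q) (cdist (2*k) k p + cdist (2*l) 0 q2)) :
    i = p ∧ j = q ∧ j2 = q2 := by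
  have A1 : 2 * min (cdist (2*k) 0 i + cdist (2*l) 0 j) (cdist (2*k) 0 i + cdist (2*l) 0 j2) + 1 = 2 * cdist (2*k) 0 i + cdist (2*l) 0 j + cdist (2*l) 0 j2 := vsum (by omega) (by omega) hj hj2 hwj
  have B1 : 2 * min (cdist (2*k) 0 p + cdist (2*l) 0 q) (cdist (2*k) 0 p + cdist (2*l) 0 q2) + 1 = 2 * cdist (2*k) 0 p + cdist (2*l) 0 q + cdist (2*l) 0 q2 := vsum (by omega) (by omega) hq hq2 hwq
  have sum1 : 2 * cdist (2*k) 0 i + cdist (2*l) 0 j + cdist (2*l) 0 j2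
      = 2 * cdist (2*k) 0 p + cdist (2*l) 0 q + cdist (2*l) 0 q2 := by omega
  clear A1 B1 h1
  have A2 : 2 * min (cdist (2*k) 0 i + cdist (2*l) 1 j) (cdist (2*k) 0 i + cdist (2*l) 1 j2) + 1 = 2 * cdist (2*k) 0 i + cdist (2*l) 1 j + cdist (2*l) 1 j2 := vsum (by omega) (by omega) hj hj2 hwj
  have B2 : 2 * min (cdist (2*k) 0 p + cdist (2*l) 1 q) (cdist (2*k) 0 p + cdist (2*l) 1 q2) + 1 = 2 * cdist (2*k) 0 p + cdist (2*l) 1 q + cdist (2*l) 1 q2 := vsum (by omega) (by omega) hq hq2 hwq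
  have sum2 : 2 * cdist (2*k) 0 i + cdist (2*l) 1 j + cdist (2*l) 1 j2
      = 2 * cdist (2*k) 0 p + cdist (2*l) 1 q + cdist (2*l) 1 q2 := by omega
  clear A2 B2 h2
  have A3 : 2 * min (cdist (2*k) 1 i + cdist (2*l) l j) (cdist (2*k) 1 i + cdist (2*l) l j2) + 1 = 2 * cdist (2*k) 1 i + cdist (2*l) l j + cdist (2*l) l j2 := vsum (by omega) (by omega) hj hj2 hwj
  have B3 : 2 * min (cdist (2*k) 1 p + cdist (2*l) l q) (cdist (2*k) 1 p + cdist (2*l) l q2) + 1 = 2 * cdist (2*k) 1 p + cdist (2*l) l q + cdist (2*l) l q2 := vsum (by omega) (by omega) hq hq2 hwq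
  have sum3 : 2 * cdist (2*k) 1 i + cdist (2*l) l j + cdist (2*l) l j2
      = 2 * cdist (2*k) 1 p + cdist (2*l) l q + cdist (2*l) l q2 := by omega
  clear A3 B3 h3
  have A4 : 2 * min (cdist (2*k) k i + cdist (2*l) 0 j) (cdist (2*k) k i + cdist (2*l) 0 j2) + 1 = 2 * cdist (2*k) k i + cdist (2*l) 0 j + cdist (2*l) 0 j2 := vsum (by omega) (by omega) hj hj2 hwj
  have B4 : 2 * min (cdist (2*k) k p + cdist (2*l) 0 q) (cdist (2*k) k p + cdist (2*l) 0 q2) + 1 = 2 * cdist (2*k) k p + cdist (2*l) 0 q + cdist (2*l) 0 q2 := vsum (by omega) (by omega) hq hq2 hwq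
  have sum4 : 2 * cdist (2*k) k i + cdist (2*l) 0 j + cdist (2*l) 0 j2
      = 2 * cdist (2*k) k p + cdist (2*l) 0 q + cdist (2*l) 0 q2 := by omega
  clear A4 B4 h4
  have ci := csum hi; have cp := csum hp
  have hSg0 : cdist (2*l) 0 j + cdist (2*l) 0 j2 = cdist (2*l) 0 q + cdist (2*l) 0 q2 := by omega
  have hf0 : cdist (2*k) 0 i = cdist (2*k) 0 p := by omega
  have hSg1 : cdist (2*l) 1 j + cdist (2*l) 1 j2 = cdist (2*l) 1 q + cdist (2*l) 1 q2 := by omega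
  have hjq : j = q := inj_e hl hj hj2 hq hq2 hwj hwq hSg0 hSg1
  subst hjq
  have hj2q2 : j2 = q2 := by omega
  subst hj2q2
  have hf1 : cdist (2*k) 1 i = cdist (2*k) 1 p := by omega
  exact ⟨inj_v hk hi hp hf0 hf1, rfl, rfl⟩


theorem resolve_ee_hv {k l i i2 j p q q2 : Nat} (hk : 2 ≤ k) (hl : 2 ≤ l)
    (hi : i < 2*k) (hi2 : i2 < 2*k) (hj : j < 2*l)
    (hp : p < 2*k) (hq : q < 2*l) (hq2 : q2 < 2*l)
    (hwi : i2 = i + 1 ∨ (i = 2*k - 1 ∧ i2 = 0)) (hwq : q2 = q + 1 ∨ (q = 2*l - 1 ∧ q2 = 0))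
    (h1 : min (cdist (2*k) 0 i + cdist (2*l) 0 j) (cdist (2*k) 0 i2 + cdist (2*l) 0 j)
        = min (cdist (2*k) 0 p + cdist (2*l) 0 q) (cdist (2*k) 0 p + cdist (2*l) 0 q2))
    (h4 : min (cdist (2*k) k i + cdist (2*l) 0 j) (cdist (2*k) k i2 + cdist (2*l) 0 j)
        = min (cdist (2*k) k p + cdist (2*l) 0 q) (cdist (2*k) k p + cdist (2*l) 0 q2)) :
    False := by
  have A1 : 2 * min (cdist (2*k) 0 i + cdist (2*l) 0 j) (cdist (2*k) 0 i2 + cdist (2*l) 0 j) + 1 = cdist (2*k) 0 i + cdist (2*k) 0 i2 + 2 * cdist (2*l) 0 j := hsum (by omega) (by omega) hi hi2 hwi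
  have B1 : 2 * min (cdist (2*k) 0 p + cdist (2*l) 0 q) (cdist (2*k) 0 p + cdist (2*l) 0 q2) + 1 = 2 * cdist (2*k) 0 p + cdist (2*l) 0 q + cdist (2*l) 0 q2 := vsum (by omega) (by omega) hq hq2 hwq
  have A4 : 2 * min (cdist (2*k) k i + cdist (2*l) 0 j) (cdist (2*k) k i2 + cdist (2*l) 0 j) + 1 = cdist (2*k) k i + cdist (2*k) k i2 + 2 * cdist (2*l) 0 j := hsum (by omega) (by omega) hi hi2 hwi
  have B4 : 2 * min (cdist (2*k) k p + cdist (2*l) 0 q) (cdist (2*k) k p + cdist (2*l) 0 q2) + 1 = 2 * cdist (2*k) k p + cdist (2*l) 0 q + cdist (2*l) 0 q2 := vsum (by omega) (by omega) hq hq2 hwq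
  have ci := csum hi; have ci2 := csum hi2; have cp := csum hp
  have p1 : cdist (2*l) 0 q % 2 = (0 + q) % 2 := cpar (by omega) hq
  have p2 : cdist (2*l) 0 q2 % 2 = (0 + q2) % 2 := cpar (by omega) hq2
  omega


theorem resolve_ve_h {k l a b i i2 j : Nat} (hk : 2 ≤ k) (hl : 2 ≤ l)
    (ha : a < 2*k) (hb : b < 2*l) (hi : i < 2*k) (hi2 : i2 < 2*k) (hj : j < 2*l)
    (hwi : i2 = i + 1 ∨ (i = 2*k - 1 ∧ i2 = 0))
    (h1 : cdist (2*k) 0 a + cdist (2*l) 0 b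
        = min (cdist (2*k) 0 i + cdist (2*l) 0 j) (cdist (2*k) 0 i2 + cdist (2*l) 0 j))
    (h4 : cdist (2*k) k a + cdist (2*l) 0 b
        = min (cdist (2*k) k i + cdist (2*l) 0 j) (cdist (2*k) k i2 + cdist (2*l) 0 j)) :
    False := by
  have A1 : 2 * min (cdist (2*k) 0 i + cdist (2*l) 0 j) (cdist (2*k) 0 i2 + cdist (2*l) 0 j) + 1 = cdist (2*k) 0 i + cdist (2*k) 0 i2 + 2 * cdist (2*l) 0 j := hsum (by omega) (by omega) hi hi2 hwi
  have A4 : 2 * min (cdist (2*k) k i + cdist (2*l) 0 j) (cdist (2*k) k i2 + cdist (2*l) 0 j) + 1 = cdist (2*k) k i + cdist (2*k) k i2 + 2 * cdist (2*l) 0 j := hsum (by omega) (by omega) hi hi2 hwi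
  have ca := csum ha; have ci := csum hi; have ci2 := csum hi2
  omega


theorem resolve_ve_v {k l a b i j j2 : Nat} (hk : 2 ≤ k) (hl : 2 ≤ l)
    (ha : a < 2*k) (hb : b < 2*l) (hi : i < 2*k) (hj : j < 2*l) (hj2 : j2 < 2*l)
    (hwj : j2 = j + 1 ∨ (j = 2*l - 1 ∧ j2 = 0))
    (h1 : cdist (2*k) 0 a + cdist (2*l) 0 b
        = min (cdist (2*k) 0 i + cdist (2*l) 0 j) (cdist (2*k) 0 i + cdist (2*l) 0 j2))
    (h3 : cdist (2*k) 1 a + cdist (2*l) l b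
        = min (cdist (2*k) 1 i + cdist (2*l) l j) (cdist (2*k) 1 i + cdist (2*l) l j2)) :
    False := by
  have A1 : 2 * min (cdist (2*k) 0 i + cdist (2*l) 0 j) (cdist (2*k) 0 i + cdist (2*l) 0 j2) + 1 = 2 * cdist (2*k) 0 i + cdist (2*l) 0 j + cdist (2*l) 0 j2 := vsum (by omega) (by omega) hj hj2 hwj
  have A3 : 2 * min (cdist (2*k) 1 i + cdist (2*l) l j) (cdist (2*k) 1 i + cdist (2*l) l j2) + 1 = 2 * cdist (2*k) 1 i + cdist (2*l) l j + cdist (2*l) l j2 := vsum (by omega) (by omega) hj hj2 hwj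
  have cb := csum hb; have cj := csum hj; have cj2 := csum hj2
  have p1 : cdist (2*k) 0 a % 2 = (0 + a) % 2 := cpar (by omega) ha
  have p2 : cdist (2*k) 1 a % 2 = (1 + a) % 2 := cpar (by omega) ha
  have p3 : cdist (2*k) 0 i % 2 = (0 + i) % 2 := cpar (by omega) hi
  have p4 : cdist (2*k) 1 i % 2 = (1 + i) % 2 := cpar (by omega) hi
  omega


theorem cyc_adj {n : ℕ} {u v : ZMod n} :
    (cycleZ n).Adj u v ↔ u ≠ v ∧ (u - v = 1 ∨ v - u = 1) := by
  simp [cycleZ, fromRel_adj]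

theorem one_ne_zero' {n : ℕ} (hn : 2 ≤ n) : (1 : ZMod n) ≠ 0 := by
  haveI : Fact (1 < n) := ⟨hn⟩
  exact one_ne_zero

theorem adj_succ {n : ℕ} (hn : 2 ≤ n) (u : ZMod n) : (cycleZ n).Adj u (u + 1) := by
  rw [cyc_adj]
  refine ⟨fun h => one_ne_zero' hn ?_, Or.inr (by ring)⟩
  have := congrArg (fun z => z - u) h
  simpa using this.symm

theorem adj_pred {n : ℕ} (hn : 2 ≤ n) (u : ZMod n) : (cycleZ n).Adj u (u - 1) := by
  rw [cyc_adj]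
  refine ⟨fun h => one_ne_zero' hn ?_, Or.inl (by ring)⟩
  have := congrArg (fun z => u - z) h
  simpa using this.symm

theorem exists_walk_add {n : ℕ} (hn : 2 ≤ n) (u : ZMod n) (c : ℕ) :
    ∃ w : (cycleZ n).Walk u (u + c), w.length = c := by
  induction c generalizing u with
  | zero => exact ⟨Walk.nil.copy rfl (by simp), by simp⟩
  | succ c ih =>
    obtain ⟨w, hw⟩ := ih (u + 1)
    exact ⟨Walk.cons (adj_succ hn u) (w.copy rfl (by push_cast; ring)), by simp [hw]⟩

theorem exists_walk_sub {n : ℕ} (hn : 2 ≤ n) (u : ZMod n) (c : ℕ) :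
    ∃ w : (cycleZ n).Walk u (u - c), w.length = c := by
  induction c generalizing u with
  | zero => exact ⟨Walk.nil.copy rfl (by simp), by simp⟩
  | succ c ih =>
    obtain ⟨w, hw⟩ := ih (u - 1)
    exact ⟨Walk.cons (adj_pred hn u) (w.copy rfl (by push_cast; ring)), by simp [hw]⟩

theorem cyc_reachable {n : ℕ} (hn : 2 ≤ n) (u v : ZMod n) : (cycleZ n).Reachable u v := by
  haveI : NeZero n := ⟨by omega⟩
  obtain ⟨w, -⟩ := exists_walk_add hn u (v - u).val
  have he : u + ((v - u).val : ZMod n) = v := by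
    rw [ZMod.natCast_rightInverse (v - u)]; ring
  exact ⟨w.copy rfl he⟩

theorem cyc_connected {n : ℕ} (hn : 2 ≤ n) : (cycleZ n).Connected := by
  haveI : NeZero n := ⟨by omega⟩
  rw [connected_iff]
  exact ⟨fun u v => cyc_reachable hn u v, ⟨0⟩⟩

theorem val_add_one {n : ℕ} (hn : 2 ≤ n) (x : ZMod n) :
    (x + 1).val = x.val + 1 ∨ (x.val = n - 1 ∧ (x + 1).val = 0) := by
  haveI : NeZero n := ⟨by omega⟩
  haveI : Fact (1 < n) := ⟨hn⟩
  have h1 : (x + 1).val = (x.val + 1) % n := by rw [ZMod.val_add, ZMod.val_one]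
  have hx := x.val_lt
  rcases Nat.lt_or_ge (x.val + 1) n with h | h
  · left; rw [h1, Nat.mod_eq_of_lt h]
  · right
    have hxe : x.val = n - 1 := by omega
    constructor
    · exact hxe
    · rw [h1, hxe]
      have : n - 1 + 1 = n := by omega
      rw [this, Nat.mod_self]

theorem val_sub_one {n : ℕ} (hn : 2 ≤ n) (x : ZMod n) :
    (x - 1).val = x.val - 1 ∨ (x.val = 0 ∧ (x - 1).val = n - 1) := by
  haveI : NeZero n := ⟨by omega⟩
  haveI : Fact (1 < n) := ⟨hn⟩
  have hc : ((n - 1 : ℕ) : ZMod n) = -1 := by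
    rw [Nat.cast_sub (by omega), ZMod.natCast_self, Nat.cast_one]; ring
  have h1 : (x - 1).val = (x.val + (n - 1)) % n := by
    have : x - 1 = x + ((n - 1 : ℕ) : ZMod n) := by rw [hc]; ring
    rw [this, ZMod.val_add, ZMod.val_natCast_of_lt (by omega)]
  have hx := x.val_lt
  rcases Nat.eq_zero_or_pos x.val with h | h
  · right
    refine ⟨h, ?_⟩
    rw [h1, h, Nat.zero_add, Nat.mod_eq_of_lt (by omega)]
  · left
    have : x.val + (n - 1) = n + (x.val - 1) := by omega
    rw [h1, this, Nat.add_mod_left, Nat.mod_eq_of_lt (by omega)]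

/-- one step changes the cyclic distance profile by at most one. -/
theorem fstep {n : ℕ} (hn : 2 ≤ n) (a : ZMod n) :
    min (a + 1).val (n - (a + 1).val) ≤ min a.val (n - a.val) + 1 ∧
    min (a - 1).val (n - (a - 1).val) ≤ min a.val (n - a.val) + 1 := by
  haveI : NeZero n := ⟨by omega⟩
  have h1 := val_add_one hn a
  have h2 := val_sub_one hn a
  have hx := a.val_lt
  have hy := (a + 1).val_lt
  have hz := (a - 1).val_lt
  omega

theorem cyc_lb {n : ℕ} (hn : 2 ≤ n) {u v : ZMod n} (w : (cycleZ n).Walk u v) :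
    min (v - u).val (n - (v - u).val) ≤ w.length := by
  haveI : NeZero n := ⟨by omega⟩
  induction w with
  | nil => simp
  | @cons u x v h p ih =>
    rw [cyc_adj] at h
    rcases h.2 with h2 | h2
    · -- u - x = 1, so v - u = (v - x) - 1
      have he : v - u = (v - x) - 1 := by rw [← h2]; ring
      have := (fstep hn (v - x)).2
      rw [he, Walk.length_cons]
      omega
    · -- x - u = 1, so v - u = (v - x) + 1
      have he : v - u = (v - x) + 1 := by rw [← h2]; ring
      have := (fstep hn (v - x)).1
      rw [he, Walk.length_cons]
      omega

theorem cyc_dist {n : ℕ} (hn : 2 ≤ n) (u v : ZMod n) :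
    (cycleZ n).dist u v = min (v - u).val (n - (v - u).val) := by
  haveI : NeZero n := ⟨by omega⟩
  apply le_antisymm
  · have he : u + ((v - u).val : ZMod n) = v := by
      rw [ZMod.natCast_rightInverse (v - u)]; ring
    obtain ⟨w1, hw1⟩ := exists_walk_add hn u (v - u).val
    have d1 : (cycleZ n).dist u v ≤ (v - u).val := by
      have := SimpleGraph.dist_le (w1.copy rfl he)
      simpa [hw1] using this
    have he2 : u - ((n - (v - u).val : ℕ) : ZMod n) = v := by
      rw [Nat.cast_sub (le_of_lt (v - u).val_lt), ZMod.natCast_self,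
        ZMod.natCast_rightInverse (v - u)]
      ring
    obtain ⟨w2, hw2⟩ := exists_walk_sub hn u (n - (v - u).val)
    have d2 : (cycleZ n).dist u v ≤ n - (v - u).val := by
      have := SimpleGraph.dist_le (w2.copy rfl he2)
      simpa [hw2] using this
    exact le_min d1 d2
  · obtain ⟨w, hw⟩ := (cyc_reachable hn u v).exists_walk_length_eq_dist
    rw [← hw]
    exact cyc_lb hn w

theorem cyc_dist_val {n : ℕ} (hn : 2 ≤ n) (u v : ZMod n) :
    (cycleZ n).dist u v = cdist n u.val v.val := by
  haveI : NeZero n := ⟨by omega⟩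
  rw [cyc_dist hn]
  have hu := u.val_lt
  have hv := v.val_lt
  rcases le_or_gt u.val v.val with h | h
  · have hs : (v - u).val = v.val - u.val := ZMod.val_sub h
    rw [hs]; simp only [cdist]; omega
  · have hne2 : u - v ≠ 0 := by
      intro hz
      have h2 : u = v := by
        have := congrArg (fun z => z + v) hz
        simpa using this
      rw [h2] at h
      exact lt_irrefl _ h
    haveI : NeZero (u - v) := ⟨hne2⟩
    have hs : (v - u).val = n - (u - v).val := by
      have hneg : -(u - v) = v - u := by ring
      rw [← hneg]
      exact ZMod.val_neg_of_ne_zero (u - v)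
    have hs2 : (u - v).val = u.val - v.val := ZMod.val_sub (le_of_lt h)
    have hle : (u - v).val ≤ n := le_of_lt (u - v).val_lt
    rw [hs, hs2]; simp only [cdist]; omega


theorem torus_lb {m n : ℕ} (hm : 2 ≤ m) (hn : 2 ≤ n) {u v : ZMod m × ZMod n}
    (w : (torus m n).Walk u v) :
    (cycleZ m).dist u.1 v.1 + (cycleZ n).dist u.2 v.2 ≤ w.length := by
  induction w with
  | nil => simp
  | @cons u x v h p ih =>
    rw [Walk.length_cons]
    rcases (boxProd_adj).mp h with ⟨ha, he⟩ | ⟨ha, he⟩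
    · have ht := (cyc_connected hm).dist_triangle (u := u.1) (v := x.1) (w := v.1)
      have h1 : (cycleZ m).dist u.1 x.1 ≤ 1 := by
        have := SimpleGraph.dist_le (Walk.cons ha Walk.nil)
        simpa using this
      rw [he] at *
      omega
    · have ht := (cyc_connected hn).dist_triangle (u := u.2) (v := x.2) (w := v.2)
      have h1 : (cycleZ n).dist u.2 x.2 ≤ 1 := by
        have := SimpleGraph.dist_le (Walk.cons ha Walk.nil)
        simpa using this
      rw [he] at *
      omega

theorem torus_dist {m n : ℕ} (hm : 2 ≤ m) (hn : 2 ≤ n) (u v : ZMod m × ZMod n) :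
    (torus m n).dist u v = (cycleZ m).dist u.1 v.1 + (cycleZ n).dist u.2 v.2 := by
  obtain ⟨u1, u2⟩ := u
  obtain ⟨v1, v2⟩ := v
  apply le_antisymm
  · obtain ⟨w1, hw1⟩ := (cyc_connected hm).exists_walk_length_eq_dist u1 v1
    obtain ⟨w2, hw2⟩ := (cyc_connected hn).exists_walk_length_eq_dist u2 v2
    have := SimpleGraph.dist_le ((w1.boxProdLeft (cycleZ n) u2).append
      (w2.boxProdRight (cycleZ m) v1))
    have l1 : (w1.boxProdLeft (cycleZ n) u2).length = w1.length := Walk.length_map _ _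
    have l2 : (w2.boxProdRight (cycleZ m) v1).length = w2.length := Walk.length_map _ _
    rw [Walk.length_append, l1, l2] at this
    simpa [torus, Walk.boxProdLeft, Walk.boxProdRight, hw1, hw2] using this
  · obtain ⟨w, hw⟩ := (((cyc_connected hm).boxProd (cyc_connected hn)).exists_walk_length_eq_dist
      (u1, u2) (v1, v2))
    show _ ≤ (cycleZ m □ cycleZ n).dist (u1, u2) (v1, v2)
    rw [← hw]
    exact torus_lb hm hn w

theorem torus_dist_val {m n : ℕ} (hm : 2 ≤ m) (hn : 2 ≤ n) (u v : ZMod m × ZMod n) :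
    (torus m n).dist u v = cdist m u.1.val v.1.val + cdist n u.2.val v.2.val := by
  rw [torus_dist hm hn, cyc_dist_val hm, cyc_dist_val hn]

theorem torus_edge {m n : ℕ} {e : Sym2 (ZMod m × ZMod n)} (he : e ∈ (torus m n).edgeSet) :
    (∃ x y, e = s((x, y), (x + 1, y))) ∨ (∃ x y, e = s((x, y), (x, y + 1))) := by
  induction e with
  | _ u v =>
    rw [mem_edgeSet] at he
    obtain ⟨u1, u2⟩ := u
    obtain ⟨v1, v2⟩ := v
    rcases (boxProd_adj).mp he with ⟨ha, hee⟩ | ⟨ha, hee⟩ <;>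
      simp only at hee <;> subst hee <;> rw [cyc_adj] at ha
    · rcases ha.2 with h2 | h2
      · left
        refine ⟨v1, u2, ?_⟩
        have : u1 = v1 + 1 := by rw [← h2]; ring
        rw [this, Sym2.eq_swap]
      · left
        refine ⟨u1, u2, ?_⟩
        have : v1 = u1 + 1 := by rw [← h2]; ring
        rw [this]
    · rcases ha.2 with h2 | h2
      · right
        refine ⟨u1, v2, ?_⟩
        have : u2 = v2 + 1 := by rw [← h2]; ring
        rw [this, Sym2.eq_swap]
      · right
        refine ⟨u1, u2, ?_⟩
        have : v2 = u2 + 1 := by rw [← h2]; ring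
        rw [this]

theorem edist_mk {V : Type*} (G : SimpleGraph V) (w u v : V) :
    edist G w s(u, v) = min (G.dist w u) (G.dist w v) := rfl




end TorusAux

open TorusAux in
theorem stmt_8 (k l : Nat) (hk : 2 ≤ k) (hl : 2 ≤ l) :
    MixedResolvingSet (torus (2 * k) (2 * l))
      {((0 : ZMod (2 * k)), (0 : ZMod (2 * l))), (0, 1), (1, (l : ZMod (2 * l))),
        ((k : ZMod (2 * k)), 0)} ∧
    mixedDim (torus (2 * k) (2 * l)) ≤ 4 := by
  classical
  have hm : 2 ≤ 2*k := by omega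
  have hn : 2 ≤ 2*l := by omega
  haveI : NeZero (2*k) := ⟨by omega⟩
  haveI : NeZero (2*l) := ⟨by omega⟩
  haveI : Fact (1 < 2*k) := ⟨by omega⟩
  haveI : Fact (1 < 2*l) := ⟨by omega⟩
  have v0k : (0 : ZMod (2*k)).val = 0 := ZMod.val_zero
  have v1k : (1 : ZMod (2*k)).val = 1 := ZMod.val_one _
  have vkk : (k : ZMod (2*k)).val = k := ZMod.val_natCast_of_lt (by omega)
  have v0l : (0 : ZMod (2*l)).val = 0 := ZMod.val_zero
  have v1l : (1 : ZMod (2*l)).val = 1 := ZMod.val_one _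
  have vll : (l : ZMod (2*l)).val = l := ZMod.val_natCast_of_lt (by omega)
  have hMRS : MixedResolvingSet (torus (2*k) (2*l))
      {((0 : ZMod (2*k)), (0 : ZMod (2*l))), (0, 1), (1, (l : ZMod (2*l))),
        ((k : ZMod (2*k)), 0)} := by
    refine ⟨?_, ?_, ?_⟩
    · -- vertex pairs
      intro u v huv
      by_contra hcon
      push_neg at hcon
      have h1 := hcon ((0 : ZMod (2*k)), (0 : ZMod (2*l))) (by simp)
      have h2 := hcon ((0 : ZMod (2*k)), (1 : ZMod (2*l))) (by simp)
      have h3 := hcon ((1 : ZMod (2*k)), (l : ZMod (2*l))) (by simp)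
      have h4 := hcon ((k : ZMod (2*k)), (0 : ZMod (2*l))) (by simp)
      simp only [torus_dist_val hm hn, v0k, v0l, v1k, v1l, vkk, vll] at h1 h2 h3 h4
      obtain ⟨hx, hy⟩ := resolve_vv hk hl u.1.val_lt u.2.val_lt v.1.val_lt v.2.val_lt
        h1 h2 h3 h4
      exact huv (Prod.ext_iff.mpr ⟨ZMod.val_injective _ hx, ZMod.val_injective _ hy⟩)
    · -- edge pairs
      intro e he f hf hef
      by_contra hcon
      push_neg at hcon
      have h1 := hcon ((0 : ZMod (2*k)), (0 : ZMod (2*l))) (by simp)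
      have h2 := hcon ((0 : ZMod (2*k)), (1 : ZMod (2*l))) (by simp)
      have h3 := hcon ((1 : ZMod (2*k)), (l : ZMod (2*l))) (by simp)
      have h4 := hcon ((k : ZMod (2*k)), (0 : ZMod (2*l))) (by simp)
      rcases torus_edge he with ⟨x, y, rfl⟩ | ⟨x, y, rfl⟩ <;>
        rcases torus_edge hf with ⟨p, q, rfl⟩ | ⟨p, q, rfl⟩ <;>
        simp only [edist_mk, torus_dist_val hm hn, v0k, v0l, v1k, v1l, vkk, vll]
          at h1 h2 h3 h4
      · obtain ⟨hip, hi2, hjq⟩ := resolve_ee_hh hk hl x.val_lt (x+1).val_lt y.val_lt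
          p.val_lt (p+1).val_lt q.val_lt (val_add_one hm x) (val_add_one hm p) h1 h2 h3 h4
        exact hef (by rw [ZMod.val_injective _ hip, ZMod.val_injective _ hjq])
      · exact resolve_ee_hv hk hl x.val_lt (x+1).val_lt y.val_lt
          p.val_lt q.val_lt (q+1).val_lt (val_add_one hm x) (val_add_one hn q) h1 h4
      · exact resolve_ee_hv hk hl p.val_lt (p+1).val_lt q.val_lt
          x.val_lt y.val_lt (y+1).val_lt (val_add_one hm p) (val_add_one hn y)
          h1.symm h4.symm
      · obtain ⟨hip, hjq, hj2⟩ := resolve_ee_vv hk hl x.val_lt y.val_lt (y+1).val_lt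
          p.val_lt q.val_lt (q+1).val_lt (val_add_one hn y) (val_add_one hn q) h1 h2 h3 h4
        exact hef (by rw [ZMod.val_injective _ hip, ZMod.val_injective _ hjq])
    · -- vertex vs edge
      intro u e he
      by_contra hcon
      push_neg at hcon
      have h1 := hcon ((0 : ZMod (2*k)), (0 : ZMod (2*l))) (by simp)
      have h3 := hcon ((1 : ZMod (2*k)), (l : ZMod (2*l))) (by simp)
      have h4 := hcon ((k : ZMod (2*k)), (0 : ZMod (2*l))) (by simp)
      rcases torus_edge he with ⟨x, y, rfl⟩ | ⟨x, y, rfl⟩ <;>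
        simp only [edist_mk, torus_dist_val hm hn, v0k, v0l, v1k, v1l, vkk, vll]
          at h1 h3 h4
      · exact resolve_ve_h hk hl u.1.val_lt u.2.val_lt x.val_lt (x+1).val_lt y.val_lt
          (val_add_one hm x) h1 h4
      · exact resolve_ve_v hk hl u.1.val_lt u.2.val_lt x.val_lt y.val_lt (y+1).val_lt
          (val_add_one hn y) h1 h3
  refine ⟨hMRS, ?_⟩
  apply Nat.sInf_le
  refine ⟨_, hMRS, ?_⟩
  have e01l : (0 : ZMod (2*l)) ≠ 1 := fun h => by
    have := congrArg ZMod.val h; rw [v0l, v1l] at this; omega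
  have e01k : (0 : ZMod (2*k)) ≠ 1 := fun h => by
    have := congrArg ZMod.val h; rw [v0k, v1k] at this; omega
  have e0kk : (0 : ZMod (2*k)) ≠ (k : ZMod (2*k)) := fun h => by
    have := congrArg ZMod.val h; rw [v0k, vkk] at this; omega
  have e1kk : (1 : ZMod (2*k)) ≠ (k : ZMod (2*k)) := fun h => by
    have := congrArg ZMod.val h; rw [v1k, vkk] at this; omega
  have d1 : ((0 : ZMod (2*k)), (0 : ZMod (2*l)))
      ∉ ({(0, 1), (1, (l : ZMod (2*l))), ((k : ZMod (2*k)), 0)} :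
        Set (ZMod (2*k) × ZMod (2*l))) := by
    simp [Prod.ext_iff, e01l, e01k, e0kk]
  have d2 : ((0 : ZMod (2*k)), (1 : ZMod (2*l)))
      ∉ ({(1, (l : ZMod (2*l))), ((k : ZMod (2*k)), 0)} :
        Set (ZMod (2*k) × ZMod (2*l))) := by
    simp [Prod.ext_iff, e01k, e0kk]
  have d3 : ((1 : ZMod (2*k)), (l : ZMod (2*l)))
      ∉ ({((k : ZMod (2*k)), 0)} : Set (ZMod (2*k) × ZMod (2*l))) := by
    simp [Prod.ext_iff, e1kk]
  rw [Set.ncard_insert_of_notMem d1 (Set.toFinite _),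
    Set.ncard_insert_of_notMem d2 (Set.toFinite _),
    Set.ncard_insert_of_notMem d3 (Set.toFinite _), Set.ncard_singleton]
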